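/- Let N be a positive integer, a, b ∈ ℝ^N, and let Π_N be the group of permutations of {1, ..., N} equipped with the uniform probability measure; expectation is denoted E. Define f(σ) = |Σ_{i=1}^N a_{σ(i)} b_i|. Then for every real p ≥ 2, E |f − E f|^p ≤ 4^p · N^{p/2} · p^{p/2} · ‖a‖_∞^p · ‖b‖_∞^p. -/

import Mathlib

set_option maxHeartbeats 1000000

open Finset

namespace Stmt17Aux

variable {N : ℕ}

/-- The permutation statistic `T σ = ∑ i, a (σ i) * β i`. -/
def TT (a β : Fin N → ℝ) (σ : Equiv.Perm (Fin N)) : ℝ := ∑ i, a (σ i) * β i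

/-- The increment when swapping positions `I` and `J`. -/
def DD (a β : Fin N → ℝ) (σ : Equiv.Perm (Fin N)) (I J : Fin N) : ℝ :=
  (a (σ I) - a (σ J)) * (β I - β J)

lemma double_sum (x y : Fin N → ℝ) :
    ∑ I : Fin N, ∑ J : Fin N, (x I - x J) * (y I - y J)
      = 2 * N * (∑ i, x i * y i) - 2 * (∑ i, x i) * (∑ i, y i) := by
  have h : ∀ I J : Fin N, (x I - x J) * (y I - y J)
      = x I * y I - x I * y J - x J * y I + x J * y J := fun _ _ => by ring
  simp only [h, Finset.sum_add_distrib, Finset.sum_sub_distrib, Finset.sum_const,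
    Finset.card_univ, Fintype.card_fin, nsmul_eq_mul, ← Finset.mul_sum, ← Finset.sum_mul]
  ring

lemma sum_pow_pair_le (x y : ℝ) (hx : 0 ≤ x) (hy : 0 ≤ y) (m : ℕ) :
    ∑ j ∈ range (m+1), x ^ j * y ^ (m - j) ≤ ((m:ℝ)+1)/2 * (x ^ m + y ^ m) := by
  have key : ∀ j ∈ range (m+1), x ^ j * y ^ (m - j) + x ^ (m - j) * y ^ j ≤ x ^ m + y ^ m := by
    intro j hj
    have hjm : j ≤ m := Nat.lt_succ_iff.mp (mem_range.mp hj)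
    have hxm : x ^ j * x ^ (m - j) = x ^ m := by
      rw [← pow_add, Nat.add_sub_cancel' hjm]
    have hym : y ^ j * y ^ (m - j) = y ^ m := by
      rw [← pow_add, Nat.add_sub_cancel' hjm]
    rcases le_total x y with hxy | hxy
    · have h1 : x ^ j ≤ y ^ j := pow_le_pow_left₀ hx hxy j
      have h2 : x ^ (m - j) ≤ y ^ (m - j) := pow_le_pow_left₀ hx hxy (m - j)
      nlinarith [mul_nonneg (sub_nonneg.2 h1) (sub_nonneg.2 h2)]
    · have h1 : y ^ j ≤ x ^ j := pow_le_pow_left₀ hy hxy j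
      have h2 : y ^ (m - j) ≤ x ^ (m - j) := pow_le_pow_left₀ hy hxy (m - j)
      nlinarith [mul_nonneg (sub_nonneg.2 h1) (sub_nonneg.2 h2)]
  have refl : ∑ j ∈ range (m+1), x ^ (m - j) * y ^ j
      = ∑ j ∈ range (m+1), x ^ j * y ^ (m - j) := by
    rw [← Finset.sum_range_reflect]
    refine Finset.sum_congr rfl fun j hj => ?_
    have hjm : j ≤ m := Nat.lt_succ_iff.mp (mem_range.mp hj)
    simp [Nat.succ_sub_one, Nat.sub_sub_self hjm]
  have h2 : 2 * ∑ j ∈ range (m+1), x ^ j * y ^ (m - j)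
      ≤ ((m:ℝ)+1) * (x ^ m + y ^ m) := by
    have := Finset.sum_le_sum key
    rw [Finset.sum_add_distrib, refl] at this
    calc 2 * ∑ j ∈ range (m+1), x ^ j * y ^ (m - j)
        = (∑ j ∈ range (m+1), x ^ j * y ^ (m - j))
          + ∑ j ∈ range (m+1), x ^ j * y ^ (m - j) := by ring
      _ ≤ ∑ _j ∈ range (m+1), (x ^ m + y ^ m) := this
      _ = ((m:ℝ)+1) * (x ^ m + y ^ m) := by
          rw [Finset.sum_const, Finset.card_range, nsmul_eq_mul]; push_cast; ring
  linarith

lemma geom (m : ℕ) (hm : Even m) (t s : ℝ) :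
    (t - s) * (t ^ (m+1) - s ^ (m+1)) ≤ ((m:ℝ)+1)/2 * ((t - s)^2 * (t ^ m + s ^ m)) := by
  have hgs : t ^ (m+1) - s ^ (m+1)
      = (∑ j ∈ range (m+1), t ^ j * s ^ (m - j)) * (t - s) := by
    have := geom_sum₂_mul t s (m+1)
    simpa [Nat.succ_sub_one] using this.symm
  rw [hgs]
  have habs : ∑ j ∈ range (m+1), t ^ j * s ^ (m - j)
      ≤ ((m:ℝ)+1)/2 * (t ^ m + s ^ m) := by
    have h1 : ∀ j ∈ range (m+1), t ^ j * s ^ (m - j) ≤ |t| ^ j * |s| ^ (m - j) := by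
      intro j _
      calc t ^ j * s ^ (m - j) ≤ |t ^ j * s ^ (m - j)| := le_abs_self _
        _ = |t| ^ j * |s| ^ (m - j) := by rw [abs_mul, abs_pow, abs_pow]
    have h2 := sum_pow_pair_le |t| |s| (abs_nonneg t) (abs_nonneg s) m
    have ht : |t| ^ m = t ^ m := hm.pow_abs t
    have hs : |s| ^ m = s ^ m := hm.pow_abs s
    calc ∑ j ∈ range (m+1), t ^ j * s ^ (m - j)
        ≤ ∑ j ∈ range (m+1), |t| ^ j * |s| ^ (m - j) := Finset.sum_le_sum h1
      _ ≤ ((m:ℝ)+1)/2 * (|t| ^ m + |s| ^ m) := h2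
      _ = ((m:ℝ)+1)/2 * (t ^ m + s ^ m) := by rw [ht, hs]
  calc (t - s) * ((∑ j ∈ range (m+1), t ^ j * s ^ (m - j)) * (t - s))
      = (∑ j ∈ range (m+1), t ^ j * s ^ (m - j)) * (t - s)^2 := by ring
    _ ≤ ((m:ℝ)+1)/2 * (t ^ m + s ^ m) * (t - s)^2 :=
        mul_le_mul_of_nonneg_right habs (sq_nonneg _)
    _ = ((m:ℝ)+1)/2 * ((t - s)^2 * (t ^ m + s ^ m)) := by ring

lemma swap_step (a β : Fin N → ℝ) (σ : Equiv.Perm (Fin N)) (I J : Fin N) :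
    TT a β (σ * Equiv.swap I J) = TT a β σ - DD a β σ I J := by
  by_cases hIJ : I = J
  · subst hIJ
    simp [TT, DD, Equiv.swap_self, mul_one]
  · have hdiff : TT a β (σ * Equiv.swap I J) - TT a β σ
        = ∑ i, (a (σ (Equiv.swap I J i)) - a (σ i)) * β i := by
      simp only [TT, Equiv.Perm.mul_apply, sub_mul, Finset.sum_sub_distrib]
    have hsupp : ∀ i ∈ (univ : Finset (Fin N)), i ∉ ({I, J} : Finset (Fin N)) →
        (a (σ (Equiv.swap I J i)) - a (σ i)) * β i = 0 := by
      intro i _ hi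
      simp only [Finset.mem_insert, Finset.mem_singleton] at hi
      push_neg at hi
      rw [Equiv.swap_apply_of_ne_of_ne hi.1 hi.2]
      ring
    rw [← Finset.sum_subset (Finset.subset_univ ({I, J} : Finset (Fin N))) hsupp] at hdiff
    rw [Finset.sum_pair hIJ] at hdiff
    rw [Equiv.swap_apply_left, Equiv.swap_apply_right] at hdiff
    have : DD a β σ I J = -((a (σ J) - a (σ I)) * β I + (a (σ I) - a (σ J)) * β J) := by
      simp only [DD]; ring
    rw [this]
    linarith [hdiff]

lemma exch (a β : Fin N → ℝ) (H : ℝ → ℝ → ℝ) (I J : Fin N) :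
    ∑ σ : Equiv.Perm (Fin N), H (DD a β σ I J) (TT a β σ - DD a β σ I J)
      = ∑ σ : Equiv.Perm (Fin N), H (-DD a β σ I J) (TT a β σ) := by
  have step : ∀ σ, TT a β σ - DD a β σ I J = TT a β (σ * Equiv.swap I J) :=
    fun σ => (swap_step a β σ I J).symm
  simp only [step]
  have key := Equiv.sum_comp (Equiv.mulRight (Equiv.swap I J))
    (fun σ => H (DD a β σ I J) (TT a β (σ * Equiv.swap I J)))
  rw [← key]
  refine Finset.sum_congr rfl fun σ _ => ?_
  have h1 : σ * Equiv.swap I J * Equiv.swap I J = σ := by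
    rw [mul_assoc, Equiv.swap_mul_self, mul_one]
  have h2 : DD a β (σ * Equiv.swap I J) I J = -DD a β σ I J := by
    simp only [DD, Equiv.Perm.mul_apply, Equiv.swap_apply_left, Equiv.swap_apply_right]
    ring
  simp only [Equiv.coe_mulRight]
  rw [h1, h2]


lemma horder (F : Equiv.Perm (Fin N) → Fin N → Fin N → ℝ) :
    ∑ σ : Equiv.Perm (Fin N), ∑ I : Fin N, ∑ J : Fin N, F σ I J
      = ∑ I : Fin N, ∑ J : Fin N, ∑ σ : Equiv.Perm (Fin N), F σ I J := by
  rw [Finset.sum_comm]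
  exact Finset.sum_congr rfl fun I _ => Finset.sum_comm

lemma recursion (hN : 0 < N) (a β : Fin N → ℝ) (A B : ℝ)
    (ha : ∀ i, |a i| ≤ A) (hβ0 : ∑ i, β i = 0) (hβ2 : ∑ i, β i ^ 2 ≤ (N:ℝ) * B ^ 2)
    (k' : ℕ) :
    ∑ σ : Equiv.Perm (Fin N), TT a β σ ^ (2*k'+2)
      ≤ 4 * (N:ℝ) * ((k':ℝ)+1) * A^2 * B^2 * ∑ σ : Equiv.Perm (Fin N), TT a β σ ^ (2*k') := by
  set m := 2*k' with hm
  have hmE : Even m := even_two_mul k'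
  have hd : ∀ σ : Equiv.Perm (Fin N),
      ∑ I : Fin N, ∑ J : Fin N, DD a β σ I J = 2*(N:ℝ)*TT a β σ := by
    intro σ
    have h := double_sum (fun I => a (σ I)) β
    simpa [DD, TT, hβ0] using h
  have E1 : ∑ σ : Equiv.Perm (Fin N), ∑ I : Fin N, ∑ J : Fin N,
      DD a β σ I J * TT a β σ ^ (m+1) = 2*(N:ℝ) * ∑ σ : Equiv.Perm (Fin N), TT a β σ ^ (m+2) := by
    rw [Finset.mul_sum]
    refine Finset.sum_congr rfl fun σ _ => ?_
    calc ∑ I : Fin N, ∑ J : Fin N, DD a β σ I J * TT a β σ ^ (m+1)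
        = (∑ I : Fin N, ∑ J : Fin N, DD a β σ I J) * TT a β σ ^ (m+1) := by
          rw [Finset.sum_mul]
          exact Finset.sum_congr rfl fun I _ => by rw [Finset.sum_mul]
      _ = 2*(N:ℝ)*TT a β σ * TT a β σ ^ (m+1) := by rw [hd σ]
      _ = 2*(N:ℝ)* TT a β σ ^ (m+2) := by ring
  have E2 : ∑ σ : Equiv.Perm (Fin N), ∑ I : Fin N, ∑ J : Fin N,
      DD a β σ I J * (TT a β σ - DD a β σ I J) ^ (m+1)
      = -(2*(N:ℝ) * ∑ σ : Equiv.Perm (Fin N), TT a β σ ^ (m+2)) := by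
    rw [horder (fun σ I J => DD a β σ I J * (TT a β σ - DD a β σ I J) ^ (m+1))]
    have hIJ : ∀ I J : Fin N, ∑ σ : Equiv.Perm (Fin N),
        DD a β σ I J * (TT a β σ - DD a β σ I J) ^ (m+1)
        = ∑ σ : Equiv.Perm (Fin N), -(DD a β σ I J * TT a β σ ^ (m+1)) := by
      intro I J
      have h := exch a β (fun d t => d * t ^ (m+1)) I J
      simpa [neg_mul] using h
    calc ∑ I : Fin N, ∑ J : Fin N, ∑ σ : Equiv.Perm (Fin N),
          DD a β σ I J * (TT a β σ - DD a β σ I J) ^ (m+1)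
        = ∑ I : Fin N, ∑ J : Fin N, ∑ σ : Equiv.Perm (Fin N),
          -(DD a β σ I J * TT a β σ ^ (m+1)) := by
          exact Finset.sum_congr rfl fun I _ => Finset.sum_congr rfl fun J _ => hIJ I J
      _ = -(∑ I : Fin N, ∑ J : Fin N, ∑ σ : Equiv.Perm (Fin N),
          DD a β σ I J * TT a β σ ^ (m+1)) := by
          simp [Finset.sum_neg_distrib]
      _ = -(2*(N:ℝ) * ∑ σ : Equiv.Perm (Fin N), TT a β σ ^ (m+2)) := by
          rw [← horder (fun σ I J => DD a β σ I J * TT a β σ ^ (m+1)), E1]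
  have E3 : ∑ σ : Equiv.Perm (Fin N), ∑ I : Fin N, ∑ J : Fin N,
      DD a β σ I J^2 * (TT a β σ - DD a β σ I J) ^ m
      = ∑ σ : Equiv.Perm (Fin N), ∑ I : Fin N, ∑ J : Fin N, DD a β σ I J^2 * TT a β σ ^ m := by
    rw [horder (fun σ I J => DD a β σ I J^2 * (TT a β σ - DD a β σ I J) ^ m),
        horder (fun σ I J => DD a β σ I J^2 * TT a β σ ^ m)]
    refine Finset.sum_congr rfl fun I _ => Finset.sum_congr rfl fun J _ => ?_
    have h := exch a β (fun d t => d^2 * t ^ m) I J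
    simpa [neg_sq] using h
  have E4 : ∀ σ : Equiv.Perm (Fin N),
      ∑ I : Fin N, ∑ J : Fin N, DD a β σ I J^2 ≤ 8*(N:ℝ)^2*A^2*B^2 := by
    intro σ
    have step1 : ∀ I J : Fin N, DD a β σ I J^2 ≤ 4*A^2 * (β I - β J)^2 := by
      intro I J
      have h1 := abs_le.mp (ha (σ I))
      have h2 := abs_le.mp (ha (σ J))
      have hDD : DD a β σ I J^2 = (a (σ I) - a (σ J))^2 * (β I - β J)^2 := by
        simp [DD, mul_pow]
      rw [hDD]
      have hsq : (a (σ I) - a (σ J))^2 ≤ 4*A^2 := by nlinarith [h1.1, h1.2, h2.1, h2.2]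
      exact mul_le_mul_of_nonneg_right hsq (sq_nonneg _)
    have step2 : ∑ I : Fin N, ∑ J : Fin N, (β I - β J)^2 ≤ 2*(N:ℝ)*((N:ℝ)*B^2) := by
      have hds := double_sum β β
      have hsq : ∑ I : Fin N, ∑ J : Fin N, (β I - β J)^2 = 2*(N:ℝ)*(∑ i, β i^2) := by
        simp only [sq]
        rw [hds, hβ0]; ring
      rw [hsq]
      have h2N : (0:ℝ) ≤ 2*(N:ℝ) := by positivity
      nlinarith [hβ2]
    calc ∑ I : Fin N, ∑ J : Fin N, DD a β σ I J^2
        ≤ ∑ I : Fin N, ∑ J : Fin N, 4*A^2 * (β I - β J)^2 :=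
          Finset.sum_le_sum fun I _ => Finset.sum_le_sum fun J _ => step1 I J
      _ = 4*A^2 * ∑ I : Fin N, ∑ J : Fin N, (β I - β J)^2 := by
          rw [Finset.mul_sum]
          exact Finset.sum_congr rfl fun I _ => by rw [Finset.mul_sum]
      _ ≤ 4*A^2 * (2*(N:ℝ)*((N:ℝ)*B^2)) :=
          mul_le_mul_of_nonneg_left step2 (by positivity)
      _ = 8*(N:ℝ)^2*A^2*B^2 := by ring
  have hS : 0 ≤ ∑ σ : Equiv.Perm (Fin N), TT a β σ ^ m :=
    Finset.sum_nonneg fun σ _ => hmE.pow_nonneg _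
  have key : 4*(N:ℝ) * ∑ σ : Equiv.Perm (Fin N), TT a β σ ^ (m+2)
      ≤ ((m:ℝ)+1) * (8*(N:ℝ)^2*A^2*B^2) * ∑ σ : Equiv.Perm (Fin N), TT a β σ ^ m := by
    have lhs_eq : 4*(N:ℝ) * ∑ σ : Equiv.Perm (Fin N), TT a β σ ^ (m+2)
        = ∑ σ : Equiv.Perm (Fin N), ∑ I : Fin N, ∑ J : Fin N,
          DD a β σ I J * (TT a β σ ^ (m+1) - (TT a β σ - DD a β σ I J) ^ (m+1)) := by
      simp only [mul_sub, Finset.sum_sub_distrib]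
      rw [E1, E2]; ring
    rw [lhs_eq]
    have pt : ∀ (σ : Equiv.Perm (Fin N)) (I J : Fin N),
        DD a β σ I J * (TT a β σ ^ (m+1) - (TT a β σ - DD a β σ I J) ^ (m+1))
          ≤ ((m:ℝ)+1)/2 * (DD a β σ I J^2 * (TT a β σ ^ m + (TT a β σ - DD a β σ I J) ^ m)) := by
      intro σ I J
      have h := geom m hmE (TT a β σ) (TT a β σ - DD a β σ I J)
      simpa [sub_sub_cancel] using h
    calc ∑ σ : Equiv.Perm (Fin N), ∑ I : Fin N, ∑ J : Fin N,
          DD a β σ I J * (TT a β σ ^ (m+1) - (TT a β σ - DD a β σ I J) ^ (m+1))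
        ≤ ∑ σ : Equiv.Perm (Fin N), ∑ I : Fin N, ∑ J : Fin N,
          ((m:ℝ)+1)/2 * (DD a β σ I J^2 * (TT a β σ ^ m + (TT a β σ - DD a β σ I J) ^ m)) :=
          Finset.sum_le_sum fun σ _ => Finset.sum_le_sum fun I _ =>
            Finset.sum_le_sum fun J _ => pt σ I J
      _ = ((m:ℝ)+1)/2 * (∑ σ : Equiv.Perm (Fin N), ∑ I : Fin N, ∑ J : Fin N,
            DD a β σ I J^2 * TT a β σ ^ m
            + ∑ σ : Equiv.Perm (Fin N), ∑ I : Fin N, ∑ J : Fin N,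
            DD a β σ I J^2 * (TT a β σ - DD a β σ I J) ^ m) := by
          simp only [mul_add, Finset.sum_add_distrib, Finset.mul_sum]
      _ = ((m:ℝ)+1) * ∑ σ : Equiv.Perm (Fin N), ∑ I : Fin N, ∑ J : Fin N,
            DD a β σ I J^2 * TT a β σ ^ m := by
          rw [E3]; ring
      _ = ((m:ℝ)+1) * ∑ σ : Equiv.Perm (Fin N),
            (∑ I : Fin N, ∑ J : Fin N, DD a β σ I J^2) * TT a β σ ^ m := by
          congr 1
          refine Finset.sum_congr rfl fun σ _ => ?_
          rw [Finset.sum_mul]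
          exact Finset.sum_congr rfl fun I _ => by rw [Finset.sum_mul]
      _ ≤ ((m:ℝ)+1) * ∑ σ : Equiv.Perm (Fin N), (8*(N:ℝ)^2*A^2*B^2) * TT a β σ ^ m := by
          apply mul_le_mul_of_nonneg_left _ (by positivity)
          exact Finset.sum_le_sum fun σ _ =>
            mul_le_mul_of_nonneg_right (E4 σ) (hmE.pow_nonneg _)
      _ = ((m:ℝ)+1) * (8*(N:ℝ)^2*A^2*B^2) * ∑ σ : Equiv.Perm (Fin N), TT a β σ ^ m := by
          rw [← Finset.mul_sum]; ring
  have h4N : (0:ℝ) < 4*(N:ℝ) := by positivity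
  have hmono : ((m:ℝ)+1) * (8*(N:ℝ)^2*A^2*B^2) * ∑ σ : Equiv.Perm (Fin N), TT a β σ ^ m
      ≤ (4*(N:ℝ)) * (4 * (N:ℝ) * ((k':ℝ)+1) * A^2 * B^2 * ∑ σ : Equiv.Perm (Fin N), TT a β σ ^ m) := by
    have hdiff : (4*(N:ℝ)) * (4 * (N:ℝ) * ((k':ℝ)+1) * A^2 * B^2 * ∑ σ : Equiv.Perm (Fin N), TT a β σ ^ m)
        - ((m:ℝ)+1) * (8*(N:ℝ)^2*A^2*B^2) * ∑ σ : Equiv.Perm (Fin N), TT a β σ ^ m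
        = 8*(N:ℝ)^2*A^2*B^2* ∑ σ : Equiv.Perm (Fin N), TT a β σ ^ m := by
      rw [hm]; push_cast; ring
    have hnn : (0:ℝ) ≤ 8*(N:ℝ)^2*A^2*B^2* ∑ σ : Equiv.Perm (Fin N), TT a β σ ^ m := by
      have : (0:ℝ) ≤ 8*(N:ℝ)^2*A^2*B^2 := by positivity
      exact mul_nonneg this hS
    linarith
  exact le_of_mul_le_mul_left (key.trans hmono) h4N

lemma moment (hN : 0 < N) (a β : Fin N → ℝ) (A B : ℝ)
    (ha : ∀ i, |a i| ≤ A) (hβ0 : ∑ i, β i = 0) (hβ2 : ∑ i, β i ^ 2 ≤ (N:ℝ) * B ^ 2)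
    (k : ℕ) :
    ∑ σ : Equiv.Perm (Fin N), TT a β σ ^ (2*k)
      ≤ (4*(N:ℝ)*(k:ℝ)*A^2*B^2)^k * (Fintype.card (Equiv.Perm (Fin N)) : ℝ) := by
  induction k with
  | zero => simp
  | succ n ih =>
    have hA4 : (0:ℝ) ≤ 4*(N:ℝ)*((n:ℝ)+1)*A^2*B^2 := by positivity
    calc ∑ σ : Equiv.Perm (Fin N), TT a β σ ^ (2*(n+1))
        = ∑ σ : Equiv.Perm (Fin N), TT a β σ ^ (2*n+2) := by
          refine Finset.sum_congr rfl fun σ _ => ?_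
          congr 1
      _ ≤ 4 * (N:ℝ) * ((n:ℝ)+1) * A^2 * B^2 * ∑ σ : Equiv.Perm (Fin N), TT a β σ ^ (2*n) :=
          recursion hN a β A B ha hβ0 hβ2 n
      _ ≤ 4 * (N:ℝ) * ((n:ℝ)+1) * A^2 * B^2 *
            ((4*(N:ℝ)*(n:ℝ)*A^2*B^2)^n * (Fintype.card (Equiv.Perm (Fin N)) : ℝ)) :=
          mul_le_mul_of_nonneg_left ih hA4
      _ ≤ 4 * (N:ℝ) * ((n:ℝ)+1) * A^2 * B^2 *
            ((4*(N:ℝ)*((n:ℝ)+1)*A^2*B^2)^n * (Fintype.card (Equiv.Perm (Fin N)) : ℝ)) := by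
          apply mul_le_mul_of_nonneg_left _ hA4
          apply mul_le_mul_of_nonneg_right _ (Nat.cast_nonneg _)
          apply pow_le_pow_left₀ (by positivity) _ n
          have h0 : (0:ℝ) ≤ 4*(N:ℝ)*A^2*B^2 := by positivity
          nlinarith [h0]
      _ = (4*(N:ℝ)*((n+1:ℕ):ℝ)*A^2*B^2)^(n+1) * (Fintype.card (Equiv.Perm (Fin N)) : ℝ) := by
          push_cast; ring


lemma sq_rpow (x : ℝ) (hx : 0 ≤ x) (p : ℝ) : (x^2) ^ (p/2) = x ^ p := by
  have h2 : x^2 = x^((2:ℕ)) := by norm_num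
  rw [h2, ← Real.rpow_natCast x 2, ← Real.rpow_mul hx,
    show ((2:ℕ):ℝ) * (p/2) = p by push_cast; ring]


end Stmt17Aux

/-- Expectation with respect to the uniform probability measure on the permutation
group `Π_N` of `{1, ..., N}`. -/
noncomputable def EPi (N : ℕ) (g : Equiv.Perm (Fin N) → ℝ) : ℝ :=
  (∑ σ : Equiv.Perm (Fin N), g σ) / (Fintype.card (Equiv.Perm (Fin N)) : ℝ)

theorem stmt17 (N : ℕ) (hN : 0 < N) (a b : Fin N → ℝ) (p : ℝ) (hp : 2 ≤ p) :
    (EPi N fun σ =>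
        |(|∑ i, a (σ i) * b i|) - EPi N (fun σ' => |∑ i, a (σ' i) * b i|)| ^ p) ≤
      (4 : ℝ) ^ p * (N : ℝ) ^ (p / 2) * p ^ (p / 2) * ‖a‖ ^ p * ‖b‖ ^ p := by
  classical
  open Stmt17Aux in
  simp only [EPi]
  have hp0 : (0:ℝ) < p := lt_of_lt_of_le two_pos hp
  set M : ℝ := (Fintype.card (Equiv.Perm (Fin N)) : ℝ) with hMdef
  have hM : (0:ℝ) < M := by
    rw [hMdef]; exact_mod_cast Fintype.card_pos
  set c : ℝ := (∑ j, b j) / (N:ℝ) with hcdef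
  set β : Fin N → ℝ := fun i => b i - c with hβdef
  have hNR : ((N:ℝ)) ≠ 0 := Nat.cast_ne_zero.mpr hN.ne'
  have hsumb : ∑ j, b j = (N:ℝ) * c := by rw [hcdef]; field_simp
  have hβ0 : ∑ i, β i = 0 := by
    rw [hβdef]
    simp only [Finset.sum_sub_distrib, Finset.sum_const, Finset.card_univ, Fintype.card_fin,
      nsmul_eq_mul, hsumb]
    ring
  have hb : ∀ i, |b i| ≤ ‖b‖ := fun i => by
    simpa [Real.norm_eq_abs] using norm_le_pi_norm b i
  have ha : ∀ i, |a i| ≤ ‖a‖ := fun i => by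
    simpa [Real.norm_eq_abs] using norm_le_pi_norm a i
  have hβ2 : ∑ i, β i ^ 2 ≤ (N:ℝ) * ‖b‖ ^ 2 := by
    have hexp : ∑ i, β i ^ 2 = ∑ i, b i ^ 2 - (N:ℝ)*c^2 := by
      rw [hβdef]
      have h1 : ∀ i : Fin N, (b i - c)^2 = b i^2 - 2*c*(b i) + c^2 := fun i => by ring
      simp only [h1, Finset.sum_add_distrib, Finset.sum_sub_distrib, Finset.sum_const,
        Finset.card_univ, Fintype.card_fin, nsmul_eq_mul, ← Finset.mul_sum, hsumb]
      ring
    have hb2 : ∑ i, b i ^ 2 ≤ (N:ℝ) * ‖b‖ ^ 2 := by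
      calc ∑ i, b i ^ 2 ≤ ∑ _i : Fin N, ‖b‖^2 := by
            refine Finset.sum_le_sum fun i _ => ?_
            calc b i ^2 = |b i|^2 := (sq_abs _).symm
              _ ≤ ‖b‖^2 := by
                  have := hb i
                  nlinarith [abs_nonneg (b i)]
        _ = (N:ℝ) * ‖b‖^2 := by
            simp [Finset.sum_const, Finset.card_univ, nsmul_eq_mul]
    have hc2 : (0:ℝ) ≤ (N:ℝ)*c^2 := by positivity
    rw [hexp]; linarith
  -- relation between S and TT
  have hST : ∀ σ : Equiv.Perm (Fin N), ∑ i, a (σ i) * b i = TT a β σ + c * ∑ j, a j := by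
    intro σ
    have hpm : ∑ i, a (σ i) = ∑ j, a j := Equiv.sum_comp σ a
    rw [TT, hβdef]
    simp only [mul_sub, Finset.sum_sub_distrib]
    rw [show (∑ i, a (σ i) * c) = c * ∑ i, a (σ i) by rw [Finset.mul_sum]; exact Finset.sum_congr rfl fun i _ => by ring]
    rw [hpm]; ring
  set Ef : ℝ := (∑ σ' : Equiv.Perm (Fin N), |∑ i, a (σ' i) * b i|) / M with hEfdef
  set Y : Equiv.Perm (Fin N) → ℝ := fun σ => |(|∑ i, a (σ i) * b i|) - Ef| with hYdef
  show (∑ σ : Equiv.Perm (Fin N), Y σ ^ p) / M ≤ _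
  -- pointwise bound on Y
  set e : ℝ := (∑ τ : Equiv.Perm (Fin N), |TT a β τ|) / M with hedef
  have he : 0 ≤ e := by
    rw [hedef]
    exact div_nonneg (Finset.sum_nonneg fun τ _ => abs_nonneg _) hM.le
  have d1 : ∀ σ : Equiv.Perm (Fin N), Y σ ≤ |TT a β σ| + e := by
    intro σ
    have hEf1 : (|∑ i, a (σ i) * b i|) - Ef
        = (∑ τ : Equiv.Perm (Fin N), ((|∑ i, a (σ i) * b i|) - |∑ i, a (τ i) * b i|)) / M := by
      rw [Finset.sum_sub_distrib, Finset.sum_const, Finset.card_univ, nsmul_eq_mul, hEfdef,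
        ← hMdef]
      field_simp
    have habs : ∀ τ : Equiv.Perm (Fin N),
        abs ((|∑ i, a (σ i) * b i|) - (|∑ i, a (τ i) * b i|)) ≤ |TT a β σ| + |TT a β τ| := by
      intro τ
      calc abs ((|∑ i, a (σ i) * b i|) - (|∑ i, a (τ i) * b i|))
          ≤ |(∑ i, a (σ i) * b i) - (∑ i, a (τ i) * b i)| := abs_abs_sub_abs_le_abs_sub _ _
        _ = |TT a β σ - TT a β τ| := by rw [hST σ, hST τ]; ring_nf
        _ ≤ |TT a β σ| + |TT a β τ| := by
            simpa [sub_eq_add_neg] using abs_add_le (TT a β σ) (-(TT a β τ))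
    have h1 : abs (∑ τ : Equiv.Perm (Fin N), ((|∑ i, a (σ i) * b i|) - |∑ i, a (τ i) * b i|))
        ≤ ∑ τ : Equiv.Perm (Fin N), (|TT a β σ| + |TT a β τ|) :=
      (Finset.abs_sum_le_sum_abs _ _).trans (Finset.sum_le_sum fun τ _ => habs τ)
    have h2 : (∑ τ : Equiv.Perm (Fin N), (|TT a β σ| + |TT a β τ|)) / M = |TT a β σ| + e := by
      rw [Finset.sum_add_distrib, Finset.sum_const, Finset.card_univ, nsmul_eq_mul, ← hMdef,
        hedef]
      field_simp
    rw [hYdef]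
    show abs ((|∑ i, a (σ i) * b i|) - Ef) ≤ |TT a β σ| + e
    rw [hEf1, abs_div, abs_of_pos hM, ← h2]
    gcongr
  -- the 2k-th moment bound
  set k : ℕ := ⌈p/2⌉₊ with hkdef
  have hk1 : 1 ≤ k := by
    rw [hkdef]
    exact Nat.one_le_ceil_iff.mpr (by positivity)
  have hp2k : p ≤ 2*(k:ℝ) := by
    have := Nat.le_ceil (p/2)
    rw [← hkdef] at this
    linarith
  have hkp : (k:ℝ) ≤ p := by
    have := Nat.ceil_lt_add_one (show (0:ℝ) ≤ p/2 by positivity)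
    rw [← hkdef] at this
    linarith
  have hY2k : ∑ σ : Equiv.Perm (Fin N), Y σ ^ (2*k)
      ≤ (16*(N:ℝ)*(k:ℝ)*‖a‖^2*‖b‖^2)^k * M := by
    have hEvenk : Even (2*k) := even_two_mul k
    have step1 : ∀ σ : Equiv.Perm (Fin N),
        Y σ ^ (2*k) ≤ 2^(2*k-1) * (TT a β σ ^ (2*k) + e^(2*k)) := by
      intro σ
      calc Y σ ^ (2*k) ≤ (|TT a β σ| + e) ^ (2*k) := by
            apply pow_le_pow_left₀ (abs_nonneg _) (d1 σ)
        _ ≤ 2^(2*k-1) * (|TT a β σ| ^ (2*k) + e^(2*k)) :=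
            add_pow_le (abs_nonneg _) he (2*k)
        _ = 2^(2*k-1) * (TT a β σ ^ (2*k) + e^(2*k)) := by
            rw [hEvenk.pow_abs]
    have step2 : M * e^(2*k) ≤ ∑ σ : Equiv.Perm (Fin N), TT a β σ ^ (2*k) := by
      have h2k : 2*k = (2*k - 1) + 1 := by omega
      have hJ := pow_sum_div_card_le_sum_pow (s := (univ : Finset (Equiv.Perm (Fin N))))
        (f := fun τ => |TT a β τ|) (fun τ _ => abs_nonneg _) (2*k - 1)
      rw [← h2k] at hJ
      have hcard : ((univ : Finset (Equiv.Perm (Fin N))).card : ℝ) = M := by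
        rw [hMdef, Finset.card_univ]
      rw [hcard] at hJ
      have habs : ∑ τ : Equiv.Perm (Fin N), |TT a β τ| ^ (2*k)
          = ∑ τ : Equiv.Perm (Fin N), TT a β τ ^ (2*k) :=
        Finset.sum_congr rfl fun τ _ => hEvenk.pow_abs _
      rw [habs] at hJ
      have hee : M * e^(2*k) = (∑ τ : Equiv.Perm (Fin N), |TT a β τ|)^(2*k) / M^(2*k-1) := by
        rw [hedef, div_pow]
        rw [show M^(2*k) = M^(2*k-1) * M by rw [← pow_succ, ← h2k]]
        field_simp
      rw [hee]
      exact hJ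
    have hpow2 : (2:ℝ)^(2*k-1) * 2 = 4^k := by
      rw [← pow_succ, show 2*k-1+1 = 2*k by omega, pow_mul]
      norm_num
    have hmom := moment hN a β ‖a‖ ‖b‖ ha hβ0 hβ2 k
    rw [← hMdef] at hmom
    calc ∑ σ : Equiv.Perm (Fin N), Y σ ^ (2*k)
        ≤ ∑ σ : Equiv.Perm (Fin N), 2^(2*k-1) * (TT a β σ ^ (2*k) + e^(2*k)) :=
          Finset.sum_le_sum fun σ _ => step1 σ
      _ = 2^(2*k-1) * ((∑ σ : Equiv.Perm (Fin N), TT a β σ ^ (2*k)) + M * e^(2*k)) := by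
          rw [← Finset.mul_sum, Finset.sum_add_distrib, Finset.sum_const, Finset.card_univ,
            nsmul_eq_mul, ← hMdef]
      _ ≤ 2^(2*k-1) * ((∑ σ : Equiv.Perm (Fin N), TT a β σ ^ (2*k))
            + ∑ σ : Equiv.Perm (Fin N), TT a β σ ^ (2*k)) :=
          mul_le_mul_of_nonneg_left (add_le_add (le_refl _) step2) (by positivity)
      _ = 4^k * ∑ σ : Equiv.Perm (Fin N), TT a β σ ^ (2*k) := by
          rw [← hpow2]; ring
      _ ≤ 4^k * ((4*(N:ℝ)*(k:ℝ)*‖a‖^2*‖b‖^2)^k * M) :=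
          mul_le_mul_of_nonneg_left hmom (by positivity)
      _ = (16*(N:ℝ)*(k:ℝ)*‖a‖^2*‖b‖^2)^k * M := by
          rw [← mul_assoc, ← mul_pow]
          congr 2
          ring
  -- Jensen step (power mean inequality) and final rpow computations
  have hq1 : (1:ℝ) ≤ 2*(k:ℝ)/p := by
    rw [le_div_iff₀ hp0]
    linarith
  have hYnn : ∀ σ : Equiv.Perm (Fin N), 0 ≤ Y σ := fun σ => abs_nonneg _
  have hJensen : (∑ σ : Equiv.Perm (Fin N), Y σ ^ p) / M
      ≤ ((∑ σ : Equiv.Perm (Fin N), Y σ ^ (2*k)) / M) ^ (p/(2*(k:ℝ))) := by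
    have hw : ∀ σ ∈ (univ : Finset (Equiv.Perm (Fin N))), (0:ℝ) ≤ 1/M :=
      fun _ _ => by positivity
    have hw' : ∑ _σ : Equiv.Perm (Fin N), (1/M : ℝ) = 1 := by
      rw [Finset.sum_const, Finset.card_univ, nsmul_eq_mul, ← hMdef]
      field_simp
    have hz : ∀ σ ∈ (univ : Finset (Equiv.Perm (Fin N))), (0:ℝ) ≤ Y σ ^ p :=
      fun σ _ => Real.rpow_nonneg (hYnn σ) p
    have hmean := Real.arith_mean_le_rpow_mean (univ : Finset (Equiv.Perm (Fin N)))
      (fun _ => 1/M) (fun σ => Y σ ^ p) hw hw' hz hq1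
    have hzq : ∀ σ : Equiv.Perm (Fin N), (Y σ ^ p) ^ (2*(k:ℝ)/p) = Y σ ^ (2*k) := by
      intro σ
      rw [← Real.rpow_natCast (Y σ) (2*k), ← Real.rpow_mul (hYnn σ)]
      congr 1
      push_cast
      field_simp
    simp only [hzq] at hmean
    have hL : ∑ σ : Equiv.Perm (Fin N), (1/M) * Y σ ^ p
        = (∑ σ : Equiv.Perm (Fin N), Y σ ^ p) / M := by
      rw [Finset.sum_div]
      exact Finset.sum_congr rfl fun σ _ => by ring
    have hR : ∑ σ : Equiv.Perm (Fin N), (1/M) * Y σ ^ (2*k)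
        = (∑ σ : Equiv.Perm (Fin N), Y σ ^ (2*k)) / M := by
      rw [Finset.sum_div]
      exact Finset.sum_congr rfl fun σ _ => by ring
    rw [hL, hR] at hmean
    rw [show p/(2*(k:ℝ)) = 1/(2*(k:ℝ)/p) by rw [one_div_div]] 
    exact hmean
  have hsumnn : 0 ≤ (∑ σ : Equiv.Perm (Fin N), Y σ ^ (2*k)) / M :=
    div_nonneg (Finset.sum_nonneg fun σ _ => pow_nonneg (hYnn σ) _) hM.le
  have hbound : (∑ σ : Equiv.Perm (Fin N), Y σ ^ (2*k)) / M
      ≤ (16*(N:ℝ)*(k:ℝ)*‖a‖^2*‖b‖^2)^k := by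
    rw [div_le_iff₀ hM]
    exact hY2k
  have hexp_nn : (0:ℝ) ≤ p/(2*(k:ℝ)) := by positivity
  have hCnn : (0:ℝ) ≤ 16*(N:ℝ)*(k:ℝ)*‖a‖^2*‖b‖^2 := by positivity
  have hfinal1 : ((∑ σ : Equiv.Perm (Fin N), Y σ ^ (2*k)) / M) ^ (p/(2*(k:ℝ)))
      ≤ ((16*(N:ℝ)*(k:ℝ)*‖a‖^2*‖b‖^2)^k) ^ (p/(2*(k:ℝ))) :=
    Real.rpow_le_rpow hsumnn hbound hexp_nn
  have hk0 : ((k:ℝ)) ≠ 0 := by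
    have : (1:ℝ) ≤ (k:ℝ) := by exact_mod_cast hk1
    linarith
  have hfinal2 : ((16*(N:ℝ)*(k:ℝ)*‖a‖^2*‖b‖^2)^k) ^ (p/(2*(k:ℝ)))
      = (16*(N:ℝ)*(k:ℝ)*‖a‖^2*‖b‖^2) ^ (p/2) := by
    rw [← Real.rpow_natCast (16*(N:ℝ)*(k:ℝ)*‖a‖^2*‖b‖^2) k, ← Real.rpow_mul hCnn]
    congr 1
    field_simp
  have hfinal3 : (16*(N:ℝ)*(k:ℝ)*‖a‖^2*‖b‖^2) ^ (p/2)
      ≤ (16*(N:ℝ)*p*‖a‖^2*‖b‖^2) ^ (p/2) := by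
    apply Real.rpow_le_rpow hCnn _ (by positivity)
    have h16N : (0:ℝ) ≤ 16*(N:ℝ)*‖a‖^2*‖b‖^2 := by positivity
    nlinarith [hkp, h16N]
  have hfinal4 : (16*(N:ℝ)*p*‖a‖^2*‖b‖^2) ^ (p/2)
      = (4:ℝ)^p * (N:ℝ)^(p/2) * p^(p/2) * ‖a‖^p * ‖b‖^p := by
    have h1 : (16*(N:ℝ)*p*‖a‖^2*‖b‖^2) = 16 * (N:ℝ) * p * ‖a‖^2 * ‖b‖^2 := by ring
    rw [h1]
    rw [Real.mul_rpow (by positivity) (sq_nonneg ‖b‖),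
        Real.mul_rpow (by positivity) (sq_nonneg ‖a‖),
        Real.mul_rpow (by positivity) hp0.le,
        Real.mul_rpow (by norm_num) (Nat.cast_nonneg N)]
    rw [sq_rpow ‖a‖ (norm_nonneg a) p, sq_rpow ‖b‖ (norm_nonneg b) p]
    rw [show (16:ℝ) = 4^2 by norm_num, sq_rpow 4 (by norm_num) p]
  calc (∑ σ : Equiv.Perm (Fin N), Y σ ^ p) / M
      ≤ ((∑ σ : Equiv.Perm (Fin N), Y σ ^ (2*k)) / M) ^ (p/(2*(k:ℝ))) := hJensen
    _ ≤ ((16*(N:ℝ)*(k:ℝ)*‖a‖^2*‖b‖^2)^k) ^ (p/(2*(k:ℝ))) := hfinal1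
    _ = (16*(N:ℝ)*(k:ℝ)*‖a‖^2*‖b‖^2) ^ (p/2) := hfinal2
    _ ≤ (16*(N:ℝ)*p*‖a‖^2*‖b‖^2) ^ (p/2) := hfinal3
    _ = (4:ℝ)^p * (N:ℝ)^(p/2) * p^(p/2) * ‖a‖^p * ‖b‖^p := hfinal4
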